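/- Let $a < b$ be real numbers, $E_0 \in \mathbb{R}$, and let $V : \mathbb{R} \to \mathbb{R}$ be continuous with $V(x) < E_0$ for all $x \in [a,b)$ and $V(b) = E_0$, and continuously differentiable on a neighborhood of $b$ with $V'(b) > 0$. Let $\delta > 0$ and let $\beta : (E_0-\delta, E_0+\delta) \to \mathbb{R}$ be a continuously differentiable function with $\beta(E_0) = b$, $V(\beta(E)) = E$ for all $E$, and $V(x) < E$ for all $x \in [a, \beta(E))$. Then the function $A(E) := \int_a^{\beta(E)} \sqrt{E - V(x)}\,dx$ is differentiable at $E_0$ with $A'(E_0) = \frac{1}{2}\int_a^b (E_0 - V(x))^{-1/2}\,dx$. -/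

import Mathlib

open MeasureTheory Filter Set Real Topology

lemma sqrt_diff_bound' {u v : ℝ} (hv : 0 < v) :
    |Real.sqrt u - Real.sqrt v| ≤ |u - v| / Real.sqrt v := by
  have hsv : 0 < Real.sqrt v := Real.sqrt_pos.mpr hv
  rcases le_or_gt 0 u with hu | hu
  · have key : |Real.sqrt u - Real.sqrt v| * (Real.sqrt u + Real.sqrt v) = |u - v| := by
      rw [← abs_of_nonneg (by positivity : (0:ℝ) ≤ Real.sqrt u + Real.sqrt v), ← abs_mul]
      congr 1
      nlinarith [Real.sq_sqrt hu, Real.sq_sqrt hv.le]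
    rw [le_div_iff₀ hsv]
    calc |Real.sqrt u - Real.sqrt v| * Real.sqrt v
        ≤ |Real.sqrt u - Real.sqrt v| * (Real.sqrt u + Real.sqrt v) := by
          nlinarith [abs_nonneg (Real.sqrt u - Real.sqrt v), Real.sqrt_nonneg u]
      _ = |u - v| := key
  · have h0 : Real.sqrt u = 0 := Real.sqrt_eq_zero'.mpr hu.le
    have habs : |u - v| = v - u := by rw [abs_of_neg (by linarith)]; ring
    rw [h0, zero_sub, abs_neg, abs_of_nonneg hsv.le, le_div_iff₀ hsv, habs]
    nlinarith [Real.mul_self_sqrt hv.le]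

theorem stmt_9 (a b E0 : ℝ) (hab : a < b) (V : ℝ → ℝ)
    (hVcont : Continuous V)
    (hVlt : ∀ x ∈ Set.Ico a b, V x < E0)
    (hVb : V b = E0)
    (hC1 : ContDiffAt ℝ 1 V b)
    (hV'b : 0 < deriv V b)
    (δ : ℝ) (hδ : 0 < δ) (β : ℝ → ℝ)
    (hβC1 : ContDiffOn ℝ 1 β (Set.Ioo (E0 - δ) (E0 + δ)))
    (hβE0 : β E0 = b)
    (hβV : ∀ E ∈ Set.Ioo (E0 - δ) (E0 + δ), V (β E) = E)
    (hβlt : ∀ E ∈ Set.Ioo (E0 - δ) (E0 + δ), ∀ x ∈ Set.Ico a (β E), V x < E)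
    (A : ℝ → ℝ)
    (hA : ∀ E ∈ Set.Ioo (E0 - δ) (E0 + δ), A E = ∫ x in a..(β E), Real.sqrt (E - V x)) :
    HasDerivAt A ((1 / 2) * ∫ x in a..b, (Real.sqrt (E0 - V x))⁻¹) E0 := by
  have hmem : E0 ∈ Set.Ioo (E0 - δ) (E0 + δ) := by constructor <;> linarith
  set F : ℝ → ℝ → ℝ := fun E x => (E - E0)⁻¹ * (Real.sqrt (E - V x) - Real.sqrt (E0 - V x))
    with hF_def
  set f : ℝ → ℝ := fun x => 1 / (2 * Real.sqrt (E0 - V x)) with hf_def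
  set bound : ℝ → ℝ := fun x => (Real.sqrt (E0 - V x))⁻¹ with hbound_def
  -- C¹ neighborhood of b
  obtain ⟨u, hu_open, hbu, hVu⟩ : ∃ u, IsOpen u ∧ b ∈ u ∧ ContDiffOn ℝ 1 V u := by
    obtain ⟨u, ho, hb, h⟩ := hC1.contDiffOn' le_rfl (by simp)
    exact ⟨u, ho, hb, by simpa using h⟩
  have hderiv_cont : ContinuousOn (deriv V) u := hVu.continuousOn_deriv_of_isOpen hu_open le_rfl
  set c0 := deriv V b / 2 with hc0_def
  have hc0 : 0 < c0 := by positivity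
  -- get η with the deriv lower bound on the ball
  obtain ⟨η, hη, hηab, hball⟩ : ∃ η, 0 < η ∧ η < b - a ∧
      ∀ x ∈ Set.Icc (b - η) b, x ∈ u ∧ c0 < deriv V x := by
    have hcb : ContinuousAt (deriv V) b := hderiv_cont.continuousAt (hu_open.mem_nhds hbu)
    have h1 : ∀ᶠ y in 𝓝 b, c0 < deriv V y :=
      hcb.eventually (lt_mem_nhds (by rw [hc0_def]; linarith))
    have h2 : ∀ᶠ y in 𝓝 b, y ∈ u := eventually_of_mem (hu_open.mem_nhds hbu) fun y hy => hy
    obtain ⟨ε, hε, hb2⟩ := Metric.eventually_nhds_iff_ball.mp (h2.and h1)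
    refine ⟨min (ε/2) ((b-a)/2), lt_min (by linarith) (by linarith), ?_, fun x hx => hb2 x ?_⟩
    · have : (0:ℝ) < b - a := by linarith
      calc min (ε/2) ((b-a)/2) ≤ (b-a)/2 := min_le_right _ _
        _ < b - a := by linarith
    · have h3 : b - min (ε/2) ((b-a)/2) ≤ x := hx.1
      have h4 : x ≤ b := hx.2
      have h5 : min (ε/2) ((b-a)/2) ≤ ε/2 := min_le_left _ _
      rw [Metric.mem_ball, Real.dist_eq, abs_lt]
      constructor <;> linarith
  -- key pointwise lower bound near b
  have hlow : ∀ x ∈ Set.Ico (b - η) b, c0 * (b - x) ≤ E0 - V x := by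
    intro x hx
    have hxb : x < b := hx.2
    have hd : ∀ y ∈ Set.Ioo x b, HasDerivAt V (deriv V y) y := by
      intro y hy
      have hyu : y ∈ u := (hball y ⟨by linarith [hx.1, hy.1], hy.2.le⟩).1
      exact ((hVu.differentiableOn one_ne_zero).differentiableAt (hu_open.mem_nhds hyu)).hasDerivAt
    obtain ⟨c, hc, hceq⟩ := exists_hasDerivAt_eq_slope V (deriv V) hxb
      hVcont.continuousOn hd
    have hcmem : c0 < deriv V c := (hball c ⟨by linarith [hx.1, hc.1], hc.2.le⟩).2
    have hbx : (0:ℝ) < b - x := by linarith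
    have : V b - V x = deriv V c * (b - x) := by
      rw [hceq]; field_simp
    rw [← hVb]
    nlinarith
  have hboundmeas : Measurable bound :=
    ((continuous_const.sub hVcont).sqrt.measurable).inv
  have hb_ae : ∀ᵐ x : ℝ, x ≠ b := by
    rw [ae_iff]
    convert Real.volume_singleton (a := b) using 2
    ext y; simp
  -- integrability of the bound
  have hbound_int : IntegrableOn bound (Set.Ioc a b) := by
    have hsplit : Set.Ioc a (b - η) ∪ Set.Ioc (b - η) b = Set.Ioc a b :=
      Set.Ioc_union_Ioc_eq_Ioc (by linarith) (by linarith)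
    rw [← hsplit]
    apply IntegrableOn.union
    · have hcont : ContinuousOn bound (Set.Icc a (b - η)) := by
        apply ContinuousOn.inv₀
        · exact ((continuous_const.sub hVcont).sqrt).continuousOn
        · intro x hx
          have : V x < E0 := hVlt x ⟨hx.1, by linarith [hx.2]⟩
          exact ne_of_gt (Real.sqrt_pos.mpr (by linarith))
      exact (hcont.integrableOn_Icc).mono_set Set.Ioc_subset_Icc_self
    · have h1 : IntervalIntegrable (fun x : ℝ => x ^ (-(2⁻¹:ℝ))) volume 0 η :=
        intervalIntegral.intervalIntegrable_rpow' (by norm_num)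
      have h2 : IntervalIntegrable (fun x : ℝ => (b - x) ^ (-(2⁻¹:ℝ))) volume (b - 0) (b - η) :=
        h1.comp_sub_left b
      rw [intervalIntegrable_iff] at h2
      have h2' : IntegrableOn (fun x : ℝ => (b - x) ^ (-(2⁻¹:ℝ))) (Set.Ioc (b - η) b) := by
        apply h2.mono_set
        rw [sub_zero]
        rw [Set.uIoc_of_ge (by linarith)]
      have hg : IntegrableOn (fun x : ℝ => (Real.sqrt c0)⁻¹ * (b - x) ^ (-(2⁻¹:ℝ)))
          (Set.Ioc (b - η) b) := h2'.const_mul _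
      apply Integrable.mono hg (hboundmeas.aestronglyMeasurable.restrict)
      rw [ae_restrict_iff' measurableSet_Ioc]
      filter_upwards [hb_ae] with x hxb hx
      have hxlt : x < b := lt_of_le_of_ne hx.2 hxb
      have hbx : (0:ℝ) < b - x := by linarith
      have h1' : c0 * (b - x) ≤ E0 - V x := hlow x ⟨hx.1.le, hxlt⟩
      have hpos : (0:ℝ) < Real.sqrt (c0 * (b - x)) :=
        Real.sqrt_pos.mpr (by positivity)
      have hle : bound x ≤ (Real.sqrt (c0 * (b - x)))⁻¹ :=
        inv_anti₀ hpos (Real.sqrt_le_sqrt h1')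
      have heq : (Real.sqrt (c0 * (b - x)))⁻¹
          = (Real.sqrt c0)⁻¹ * (b - x) ^ (-(2⁻¹:ℝ)) := by
        rw [Real.sqrt_mul hc0.le, mul_inv, Real.rpow_neg hbx.le]
        congr 2
        rw [Real.sqrt_eq_rpow]
        norm_num
      have hbnd0 : 0 ≤ bound x := by positivity
      rw [Real.norm_eq_abs, Real.norm_eq_abs, abs_of_nonneg hbnd0,
        abs_of_nonneg (by positivity)]
      rw [← heq]
      exact hle
  -- a.e. x in Ioc a b lies in Ioo a b
  have hae : ∀ᵐ x ∂(volume.restrict (Set.Ioc a b)), x ∈ Set.Ioo a b := by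
    rw [ae_restrict_iff' measurableSet_Ioc]
    filter_upwards [hb_ae] with x hxb hx
    exact ⟨hx.1, lt_of_le_of_ne hx.2 hxb⟩
  -- dominated convergence
  have hne : ∀ᶠ E in 𝓝[≠] E0, E ≠ E0 := eventually_mem_nhdsWithin
  have hDCT : Tendsto (fun E => ∫ x in Set.Ioc a b, F E x) (𝓝[≠] E0)
      (𝓝 (∫ x in Set.Ioc a b, f x)) := by
    apply tendsto_integral_filter_of_dominated_convergence bound
    · exact Eventually.of_forall fun E =>
        (continuous_const.mul (((continuous_const.sub hVcont).sqrt).sub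
          ((continuous_const.sub hVcont).sqrt))).aestronglyMeasurable.restrict
    · filter_upwards [hne] with E hE
      filter_upwards [hae] with x hx
      have hv : (0:ℝ) < E0 - V x := by
        have := hVlt x ⟨hx.1.le, hx.2⟩
        linarith
      have hEe : (0:ℝ) < |E - E0| := abs_pos.mpr (sub_ne_zero.mpr hE)
      have hkey := sqrt_diff_bound' (u := E - V x) hv
      have harg : (E - V x) - (E0 - V x) = E - E0 := by ring
      rw [harg] at hkey
      have hsv : (0:ℝ) < Real.sqrt (E0 - V x) := Real.sqrt_pos.mpr hv
      calc ‖F E x‖ = |E - E0|⁻¹ * |Real.sqrt (E - V x) - Real.sqrt (E0 - V x)| := by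
            rw [hF_def]; simp [abs_mul, abs_inv]
        _ ≤ |E - E0|⁻¹ * (|E - E0| / Real.sqrt (E0 - V x)) := by
            apply mul_le_mul_of_nonneg_left hkey (by positivity)
        _ = bound x := by
            rw [hbound_def]
            field_simp
    · exact hbound_int
    · filter_upwards [hae] with x hx
      have hv : (0:ℝ) < E0 - V x := by
        have := hVlt x ⟨hx.1.le, hx.2⟩
        linarith
      have hg : HasDerivAt (fun E : ℝ => E - V x) 1 E0 := (hasDerivAt_id E0).sub_const (V x)
      have hs : HasDerivAt (fun E : ℝ => Real.sqrt (E - V x))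
          (1 / (2 * Real.sqrt (E0 - V x)) * 1) E0 :=
        (Real.hasDerivAt_sqrt hv.ne').comp E0 hg
      rw [mul_one] at hs
      have := hasDerivAt_iff_tendsto_slope.mp hs
      apply this.congr
      intro E
      rw [slope_def_field, hF_def, div_eq_inv_mul]
  -- identification of the limit
  have hLeq : (∫ x in Set.Ioc a b, f x)
      = (1 / 2) * ∫ x in a..b, (Real.sqrt (E0 - V x))⁻¹ := by
    rw [intervalIntegral.integral_of_le hab.le, ← integral_const_mul]
    congr 1
    funext x
    show (1:ℝ) / (2 * Real.sqrt (E0 - V x)) = 1/2 * (Real.sqrt (E0 - V x))⁻¹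
    rw [one_div, mul_inv]
    norm_num
  -- boundary term
  set T2 : ℝ → ℝ := fun E => (E - E0)⁻¹ * ∫ x in b..(β E), Real.sqrt (E - V x) with hT2_def
  have hT2 : Tendsto T2 (𝓝[≠] E0) (𝓝 0) := by
    obtain ⟨K, t, ht, hK⟩ := hC1.exists_lipschitzOnWith
    obtain ⟨r, hr, hrt⟩ := Metric.mem_nhds_iff.mp ht
    have hβat : ContDiffAt ℝ 1 β E0 := (hβC1 E0 hmem).contDiffAt (isOpen_Ioo.mem_nhds hmem)
    obtain ⟨K', t', ht', hK'⟩ := hβat.exists_lipschitzOnWith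
    obtain ⟨r', hr', hrt'⟩ := Metric.mem_nhds_iff.mp ht'
    set G : ℝ → ℝ := fun E => (K':ℝ) * Real.sqrt ((K:ℝ) * ((K':ℝ) * |E - E0|)) with hG_def
    have hGcont : Continuous G := by
      rw [hG_def]; fun_prop
    have hG0 : Tendsto G (𝓝[≠] E0) (𝓝 0) := by
      have h := (hGcont.tendsto E0).mono_left (nhdsWithin_le_nhds (s := {E0}ᶜ))
      simpa [hG_def] using h
    apply squeeze_zero_norm' _ hG0
    have hev1 : ∀ᶠ E in 𝓝[≠] E0, E ∈ Metric.ball E0 r' :=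
      eventually_nhdsWithin_of_eventually_nhds
        (eventually_of_mem (Metric.ball_mem_nhds E0 hr') fun y hy => hy)
    have hev2 : ∀ᶠ E in 𝓝[≠] E0, E ∈ Set.Ioo (E0 - δ) (E0 + δ) :=
      eventually_nhdsWithin_of_eventually_nhds
        (eventually_of_mem (isOpen_Ioo.mem_nhds hmem) fun y hy => hy)
    have htend : Tendsto (fun E : ℝ => (K':ℝ) * |E - E0|) (𝓝 E0) (𝓝 0) := by
      have h : Continuous (fun E : ℝ => (K':ℝ) * |E - E0|) := by fun_prop
      have := h.tendsto E0
      simpa using this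
    have hev3 : ∀ᶠ E in 𝓝[≠] E0, (K':ℝ) * |E - E0| < r :=
      eventually_nhdsWithin_of_eventually_nhds (htend.eventually (gt_mem_nhds hr))
    filter_upwards [hev1, hev2, hev3, hne] with E hE1 hE2 hE3 hEne
    have he : (0:ℝ) < |E - E0| := abs_pos.mpr (sub_ne_zero.mpr hEne)
    have hE0t' : E0 ∈ t' := hrt' (Metric.mem_ball_self hr')
    have hd : |β E - b| ≤ (K':ℝ) * |E - E0| := by
      have := hK'.dist_le_mul E (hrt' hE1) E0 hE0t'
      rw [Real.dist_eq, Real.dist_eq, hβE0] at this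
      exact this
    have hdr : |β E - b| < r := lt_of_le_of_lt hd hE3
    -- integrand bound on the interval
    have hIb : ∀ x ∈ Set.uIoc b (β E), ‖Real.sqrt (E - V x)‖ ≤
        Real.sqrt ((K:ℝ) * |β E - b|) := by
      intro x hx
      have hxmem : x ∈ Set.uIcc b (β E) := Set.uIoc_subset_uIcc hx
      have hx1 : |x - b| ≤ |β E - b| := by
        rw [Set.uIcc_eq_union] at hxmem
        rcases hxmem with h | h
        · rw [abs_le]
          rcases abs_le.mp (le_refl |β E - b|) with ⟨h1, h2⟩
          constructor <;> [linarith [h.1, abs_nonneg (β E - b)]; skip]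
          · have := h.2
            have h3 : β E - b ≤ |β E - b| := le_abs_self _
            linarith
        · rw [abs_le]
          have h3 : -(|β E - b|) ≤ β E - b := neg_abs_le _
          constructor <;> [linarith [h.1]; linarith [h.2, abs_nonneg (β E - b)]]
      have hx2 : |β E - x| ≤ |β E - b| := by
        rw [Set.uIcc_eq_union] at hxmem
        rcases hxmem with h | h
        · have h3 : β E - b ≤ |β E - b| := le_abs_self _
          rw [abs_le]
          constructor <;> [linarith [h.2, abs_nonneg (β E - b)]; linarith [h.1]]
        · have h3 : -(|β E - b|) ≤ β E - b := neg_abs_le _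
          rw [abs_le]
          constructor <;> [linarith [h.2]; linarith [h.1, abs_nonneg (β E - b)]]
      have hxball : x ∈ Metric.ball b r := by
        rw [Metric.mem_ball, Real.dist_eq]
        exact lt_of_le_of_lt hx1 hdr
      have hβball : β E ∈ Metric.ball b r := by
        rw [Metric.mem_ball, Real.dist_eq]
        exact hdr
      have hVd : |V (β E) - V x| ≤ (K:ℝ) * |β E - x| := by
        have := hK.dist_le_mul (β E) (hrt hβball) x (hrt hxball)
        rw [Real.dist_eq, Real.dist_eq] at this
        exact this
      have hEVx : E - V x ≤ (K:ℝ) * |β E - b| := by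
        have hVβ : V (β E) = E := hβV E hE2
        have h5 : E - V x ≤ |V (β E) - V x| := by
          rw [hVβ] at *
          exact le_abs_self _
        calc E - V x ≤ (K:ℝ) * |β E - x| := le_trans h5 hVd
          _ ≤ (K:ℝ) * |β E - b| := by
              apply mul_le_mul_of_nonneg_left hx2 K.coe_nonneg
      rw [Real.norm_eq_abs, abs_of_nonneg (Real.sqrt_nonneg _)]
      exact Real.sqrt_le_sqrt hEVx
    have hInorm : ‖∫ x in b..(β E), Real.sqrt (E - V x)‖ ≤
        Real.sqrt ((K:ℝ) * |β E - b|) * |β E - b| :=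
      intervalIntegral.norm_integral_le_of_norm_le_const hIb
    calc ‖T2 E‖ = |E - E0|⁻¹ * ‖∫ x in b..(β E), Real.sqrt (E - V x)‖ := by
          rw [hT2_def]
          simp [abs_mul, abs_inv]
      _ ≤ |E - E0|⁻¹ * (Real.sqrt ((K:ℝ) * |β E - b|) * |β E - b|) := by
          apply mul_le_mul_of_nonneg_left hInorm (by positivity)
      _ ≤ |E - E0|⁻¹ * (Real.sqrt ((K:ℝ) * ((K':ℝ) * |E - E0|)) * ((K':ℝ) * |E - E0|)) := by
          gcongr
      _ = G E := by
          rw [hG_def]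
          field_simp
  -- assemble
  rw [hasDerivAt_iff_tendsto_slope]
  have heq : ∀ᶠ E in 𝓝[≠] E0, slope A E0 E = (∫ x in Set.Ioc a b, F E x) + T2 E := by
    have hev2 : ∀ᶠ E in 𝓝[≠] E0, E ∈ Set.Ioo (E0 - δ) (E0 + δ) :=
      eventually_nhdsWithin_of_eventually_nhds
        (eventually_of_mem (isOpen_Ioo.mem_nhds hmem) fun y hy => hy)
    filter_upwards [hev2, hne] with E hE2 hEne
    have i1 : IntervalIntegrable (fun x => Real.sqrt (E - V x)) volume a b :=
      ((continuous_const.sub hVcont).sqrt).intervalIntegrable a b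
    have i2 : IntervalIntegrable (fun x => Real.sqrt (E - V x)) volume b (β E) :=
      ((continuous_const.sub hVcont).sqrt).intervalIntegrable b (β E)
    have i3 : IntervalIntegrable (fun x => Real.sqrt (E0 - V x)) volume a b :=
      ((continuous_const.sub hVcont).sqrt).intervalIntegrable a b
    have hFint : (∫ x in Set.Ioc a b, F E x)
        = (E - E0)⁻¹ * ∫ x in a..b, (Real.sqrt (E - V x) - Real.sqrt (E0 - V x)) := by
      rw [← intervalIntegral.integral_of_le hab.le]
      simp only [hF_def]
      rw [intervalIntegral.integral_const_mul]
    have hsub : (∫ x in a..b, Real.sqrt (E - V x)) - (∫ x in a..b, Real.sqrt (E0 - V x))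
        = ∫ x in a..b, (Real.sqrt (E - V x) - Real.sqrt (E0 - V x)) :=
      (intervalIntegral.integral_sub i1 i3).symm
    rw [slope_def_field, hA E hE2, hA E0 hmem, hβE0,
      ← intervalIntegral.integral_add_adjacent_intervals i1 i2, hFint, hT2_def, ← hsub,
      div_eq_inv_mul]
    ring
  rw [← hLeq]
  have := hDCT.add hT2
  rw [add_zero] at this
  exact this.congr' (heq.mono fun E h => h.symm)
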